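/- Let n ≥ 2 and k ≥ 2 be integers, M a compact n-dimensional hypersurface in ℝ^{n+1}, Q_k = kn/(kn-(k+1)), and suppose that for every nonnegative Lipschitz v: ||v||_{L^{((k+1)/k)Q_k}(M)}^{k+1} ≤ A_{n,k}( ||∇v||_{L^{(k+1)/k}(M)}^{k+1} + ||H||_{L^{n+k+1}(M)}^{n+k+1} ||v||_{L^{(k+1)/k}(M)}^{k+1} ). Then for every nonnegative Lipschitz v, ||v||_{L^{2Q_k}(M)}² ≤ Ã_{n,k}( ||v||_{L²(M)}^{(k-1)/k} · ||∇v||_{L²(M)}^{(k+1)/k} + (||H||_{L^{n+k+1}(M)}^{n+k+1})^{1/k} ||v||_{L²(M)}² ), where Ã_{n,k} = A_{n,k}^{1/k} · (2k/(k+1))^{(k+1)/k}. -/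

import Mathlib

open MeasureTheory
open scoped ENNReal NNReal

private lemma rpow_add_le_add_rpow_real {a b p : ℝ} (ha : 0 ≤ a) (hb : 0 ≤ b)
    (hp : 0 ≤ p) (hp1 : p ≤ 1) : (a + b) ^ p ≤ a ^ p + b ^ p := by
  have h := NNReal.rpow_add_le_add_rpow a.toNNReal b.toNNReal hp hp1
  have h2 := NNReal.coe_le_coe.2 h
  push_cast at h2
  rwa [Real.coe_toNNReal a ha, Real.coe_toNNReal b hb] at h2

set_option maxHeartbeats 1000000 in
theorem stmt_15 {M : Type*} [MeasurableSpace M] (μ : Measure M) [IsFiniteMeasure μ]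
    (n k : ℕ) (hn : 2 ≤ n) (hk : 2 ≤ k)
    (H : M → ℝ) (G : (M → ℝ) → (M → ℝ)) (A : ℝ) (hA : 0 < A)
    (hGpos : ∀ v x, 0 ≤ G v x)
    (hGchain : ∀ v : M → ℝ, (∀ x, 0 ≤ v x) → ∀ a : ℝ, 1 ≤ a →
      G (fun x => v x ^ a) = fun x => a * v x ^ (a - 1) * G v x)
    (hyp : ∀ v : M → ℝ, (∀ x, 0 ≤ v x) →
      ((∫ x, v x ^ ((((k : ℝ) + 1) / k) * (((k : ℝ) * n) / ((k : ℝ) * n - ((k : ℝ) + 1)))) ∂μ) ^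
          (1 / ((((k : ℝ) + 1) / k) * (((k : ℝ) * n) / ((k : ℝ) * n - ((k : ℝ) + 1)))))) ^ ((k : ℝ) + 1) ≤
        A * (((∫ x, (G v x) ^ (((k : ℝ) + 1) / k) ∂μ) ^ (1 / (((k : ℝ) + 1) / k))) ^ ((k : ℝ) + 1) +
          (∫ x, |H x| ^ ((n : ℝ) + k + 1) ∂μ) *
            ((∫ x, v x ^ (((k : ℝ) + 1) / k) ∂μ) ^ (1 / (((k : ℝ) + 1) / k))) ^ ((k : ℝ) + 1))) :
    ∀ v : M → ℝ, (∀ x, 0 ≤ v x) →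
      ((∫ x, v x ^ (2 * (((k : ℝ) * n) / ((k : ℝ) * n - ((k : ℝ) + 1)))) ∂μ) ^
          (1 / (2 * (((k : ℝ) * n) / ((k : ℝ) * n - ((k : ℝ) + 1)))))) ^ (2 : ℝ) ≤
        (A ^ ((1 : ℝ) / k) * (2 * (k : ℝ) / ((k : ℝ) + 1)) ^ (((k : ℝ) + 1) / k)) *
          (((∫ x, v x ^ (2 : ℝ) ∂μ) ^ ((1 : ℝ) / 2)) ^ (((k : ℝ) - 1) / k) *
              ((∫ x, (G v x) ^ (2 : ℝ) ∂μ) ^ ((1 : ℝ) / 2)) ^ (((k : ℝ) + 1) / k) +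
            (∫ x, |H x| ^ ((n : ℝ) + k + 1) ∂μ) ^ ((1 : ℝ) / k) *
              ((∫ x, v x ^ (2 : ℝ) ∂μ) ^ ((1 : ℝ) / 2)) ^ (2 : ℝ)) := by
  intro v hv
  have hk2 : (2:ℝ) ≤ (k:ℝ) := by exact_mod_cast hk
  have hn2 : (2:ℝ) ≤ (n:ℝ) := by exact_mod_cast hn
  have hkpos : (0:ℝ) < k := by linarith
  have hk1pos : (0:ℝ) < (k:ℝ) + 1 := by linarith
  have hkm1 : (0:ℝ) < (k:ℝ) - 1 := by linarith
  set Q : ℝ := ((k : ℝ) * n) / ((k : ℝ) * n - ((k : ℝ) + 1)) with hQdef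
  set c : ℝ := ((k : ℝ) + 1) / k with hcdef
  set t : ℝ := 2 * (k : ℝ) / ((k : ℝ) + 1) with htdef
  have hdpos : (0:ℝ) < (k:ℝ) * n - ((k:ℝ) + 1) := by nlinarith
  have hQ1 : 1 < Q := by
    rw [hQdef]
    rw [lt_div_iff₀ hdpos]
    linarith
  have hQpos : 0 < Q := by linarith
  have hcpos : 0 < c := by rw [hcdef]; positivity
  have ht1 : 1 ≤ t := by
    rw [htdef, le_div_iff₀ hk1pos]; linarith
  have htpos : 0 < t := by linarith
  have htc : t * c = 2 := by rw [htdef, hcdef]; field_simp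
  set P : ℝ := ∫ x, |H x| ^ ((n : ℝ) + k + 1) ∂μ with hPdef
  set S : ℝ := ∫ x, v x ^ (2 * Q) ∂μ with hSdef
  set I : ℝ := ∫ x, v x ^ (2:ℝ) ∂μ with hIdef
  set D : ℝ := ∫ x, (G v x) ^ (2:ℝ) ∂μ with hDdef
  set X : ℝ := ∫ x, v x ^ (((k:ℝ) - 1) / k) * (G v x) ^ c ∂μ with hXdef
  have hS0 : 0 ≤ S := integral_nonneg fun x => Real.rpow_nonneg (hv x) _
  have hI0 : 0 ≤ I := integral_nonneg fun x => Real.rpow_nonneg (hv x) _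
  have hD0 : 0 ≤ D := integral_nonneg fun x => Real.rpow_nonneg (hGpos v x) _
  have hP0 : 0 ≤ P := integral_nonneg fun x => Real.rpow_nonneg (abs_nonneg _) _
  have hX0 : 0 ≤ X := integral_nonneg fun x =>
    mul_nonneg (Real.rpow_nonneg (hv x) _) (Real.rpow_nonneg (hGpos v x) _)
  -- Step 1: instantiate hyp at v ^ t
  have h1 : S ^ ((k:ℝ)/Q) ≤ A * (t ^ ((k:ℝ)+1) * X ^ (k:ℝ) + P * I ^ (k:ℝ)) := by
    have hw : ∀ x, 0 ≤ v x ^ t := fun x => Real.rpow_nonneg (hv x) t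
    have hchain := hGchain v hv t ht1
    have hyp' := hyp (fun x => v x ^ t) hw
    simp only [hchain] at hyp'
    have e1 : (fun x => (v x ^ t) ^ (c * Q)) = fun x => v x ^ (2 * Q) := by
      funext x
      rw [← Real.rpow_mul (hv x)]
      congr 1
      rw [← mul_assoc, htc]
    have e3 : (fun x => (v x ^ t) ^ c) = fun x => v x ^ (2:ℝ) := by
      funext x
      rw [← Real.rpow_mul (hv x), htc]
    have e2 : (fun x => (t * v x ^ (t - 1) * G v x) ^ c)
        = fun x => t ^ c * (v x ^ (((k:ℝ) - 1) / k) * (G v x) ^ c) := by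
      funext x
      rw [Real.mul_rpow (mul_nonneg htpos.le (Real.rpow_nonneg (hv x) _)) (hGpos v x),
        Real.mul_rpow htpos.le (Real.rpow_nonneg (hv x) _), ← Real.rpow_mul (hv x), mul_assoc]
      congr 2
      rw [htdef, hcdef]
      field_simp
      ring
    rw [e1, e2, e3, integral_const_mul] at hyp'
    have hL : (S ^ (1 / (c * Q))) ^ ((k:ℝ)+1) = S ^ ((k:ℝ)/Q) := by
      rw [← Real.rpow_mul hS0]
      congr 1
      rw [hcdef]
      field_simp
    have hR1 : ((t ^ c * X) ^ (1 / c)) ^ ((k:ℝ)+1) = t ^ ((k:ℝ)+1) * X ^ (k:ℝ) := by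
      have h0 : (0:ℝ) ≤ t ^ c * X := mul_nonneg (Real.rpow_nonneg htpos.le _) hX0
      rw [← Real.rpow_mul h0]
      have he : 1 / c * ((k:ℝ)+1) = (k:ℝ) := by rw [hcdef]; field_simp
      rw [he, Real.mul_rpow (Real.rpow_nonneg htpos.le _) hX0, ← Real.rpow_mul htpos.le]
      congr 2
      rw [hcdef]; field_simp
    have hR2 : (I ^ (1 / c)) ^ ((k:ℝ)+1) = I ^ (k:ℝ) := by
      rw [← Real.rpow_mul hI0]
      congr 1
      rw [hcdef]; field_simp
    rw [hL, hR1, hR2] at hyp'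
    exact hyp'
  -- reduce the goal
  have hlhs : (S ^ (1 / (2*Q)))^(2:ℝ) = S ^ ((1:ℝ)/Q) := by
    rw [← Real.rpow_mul hS0]
    congr 1
    field_simp
  have hI2 : (I ^ ((1:ℝ)/2)) ^ (2:ℝ) = I := by
    rw [← Real.rpow_mul hI0]
    norm_num
  have hIk : (I ^ ((1:ℝ)/2)) ^ (((k:ℝ)-1)/k) = I ^ (((k:ℝ)-1)/(2*k)) := by
    rw [← Real.rpow_mul hI0]
    congr 1
    field_simp
  have hDk : (D ^ ((1:ℝ)/2)) ^ c = D ^ (((k:ℝ)+1)/(2*k)) := by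
    rw [← Real.rpow_mul hD0, hcdef]
    congr 1
    field_simp
  rw [hlhs, hI2, hIk, hDk]
  set Y : ℝ := I ^ (((k:ℝ)-1)/(2*k)) * D ^ (((k:ℝ)+1)/(2*k)) with hYdef
  have hY0 : 0 ≤ Y := mul_nonneg (Real.rpow_nonneg hI0 _) (Real.rpow_nonneg hD0 _)
  have hRHS0 : 0 ≤ A ^ ((1:ℝ)/k) * t ^ c * (Y + P ^ ((1:ℝ)/k) * I) :=
    mul_nonneg (mul_nonneg (Real.rpow_nonneg hA.le _) (Real.rpow_nonneg htpos.le _))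
      (add_nonneg hY0 (mul_nonneg (Real.rpow_nonneg hP0 _) hI0))
  rcases eq_or_ne I 0 with hIeq | hIne
  · -- degenerate case: `∫ v² = 0` forces `∫ v^{2Q} = 0`
    have hSzero : S = 0 := by
      by_contra hS
      have hint : Integrable (fun x => v x ^ (2*Q)) μ := by
        by_contra hni
        exact hS (by rw [hSdef]; exact integral_undef hni)
      have haes : AEStronglyMeasurable (fun x => v x ^ (2:ℝ)) μ := by
        have h := hint.aestronglyMeasurable
        have heq : (fun x => v x ^ (2:ℝ)) = (fun y : ℝ => y ^ ((1:ℝ)/Q)) ∘ (fun x => v x ^ (2*Q)) := by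
          funext x
          simp only [Function.comp_apply]
          rw [← Real.rpow_mul (hv x)]
          congr 1
          field_simp
        rw [heq]
        exact (Real.continuous_rpow_const (by positivity)).comp_aestronglyMeasurable h
      have hint2 : Integrable (fun x => v x ^ (2:ℝ)) μ := by
        apply Integrable.mono' ((integrable_const (1:ℝ)).add hint) haes
        refine Filter.Eventually.of_forall fun x => ?_
        rw [Real.norm_of_nonneg (Real.rpow_nonneg (hv x) _)]
        simp only [Pi.add_apply]
        rcases le_total (v x) 1 with h | h
        · have h1' : v x ^ (2:ℝ) ≤ 1 := Real.rpow_le_one (hv x) h (by norm_num)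
          have h2' : 0 ≤ v x ^ (2*Q) := Real.rpow_nonneg (hv x) _
          linarith
        · have h1' : v x ^ (2:ℝ) ≤ v x ^ (2*Q) :=
            Real.rpow_le_rpow_of_exponent_le h (by nlinarith)
          linarith
      have hae : (fun x => v x ^ (2:ℝ)) =ᵐ[μ] 0 :=
        (integral_eq_zero_iff_of_nonneg (fun x => Real.rpow_nonneg (hv x) _) hint2).mp
          (by rw [← hIdef]; exact hIeq)
      have hae2 : (fun x => v x ^ (2*Q)) =ᵐ[μ] 0 := by
        filter_upwards [hae] with x hx
        simp only [Pi.zero_apply] at hx ⊢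
        have hvx : v x = 0 := (Real.rpow_eq_zero (hv x) (by norm_num : (2:ℝ) ≠ 0)).mp hx
        rw [hvx]
        exact Real.zero_rpow (by positivity : (0:ℝ) < 2*Q).ne'
      exact hS (by rw [hSdef, integral_congr_ae hae2]; simp)
    rw [hSzero, Real.zero_rpow (by positivity : (0:ℝ) < (1:ℝ)/Q).ne']
    exact hRHS0
  · have hIpos : 0 < I := lt_of_le_of_ne hI0 (Ne.symm hIne)
    have h2 : X ≤ Y := by
      by_contra hXY
      have hXpos : 0 < X := lt_of_le_of_lt hY0 (not_le.mp hXY)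
      have hfint : Integrable (fun x => v x ^ (((k:ℝ)-1)/k) * (G v x) ^ c) μ := by
        by_contra hni
        exact hXpos.ne' (by rw [hXdef]; exact integral_undef hni)
      have hv2int : Integrable (fun x => v x ^ (2:ℝ)) μ := by
        by_contra hni
        exact hIne (by rw [hIdef]; exact integral_undef hni)
      have hvm : AEMeasurable v μ := by
        have h := hv2int.aemeasurable
        have h2' := h.pow (aemeasurable_const (b := ((2:ℝ)⁻¹ : ℝ)))
        have heq : (fun x => (v x ^ (2:ℝ)) ^ ((2:ℝ)⁻¹)) = v := funext fun x => by
          rw [← Real.rpow_mul (hv x)]; norm_num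
        rwa [heq] at h2'
      have hGv0 : ∀ x, v x = 0 → G v x = 0 := by
        intro x hx
        have hchain := hGchain (fun y => v y ^ ((2:ℝ)⁻¹))
          (fun y => Real.rpow_nonneg (hv y) _) 2 one_le_two
        have heq : (fun y => (v y ^ ((2:ℝ)⁻¹)) ^ (2:ℝ)) = v := funext fun y => by
          rw [← Real.rpow_mul (hv y)]; norm_num
        rw [heq] at hchain
        have hx' := congrFun hchain x
        rw [hx, Real.zero_rpow (by norm_num : ((2:ℝ)⁻¹) ≠ (0:ℝ)),
          Real.zero_rpow (by norm_num : ((2:ℝ) - 1) ≠ (0:ℝ))] at hx'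
        simpa using hx'
      have hbneg : (0:ℝ) < ((k:ℝ)-1)/((k:ℝ)+1) := by positivity
      have hGveq : G v = fun x =>
          (v x ^ (((k:ℝ)-1)/k) * (G v x) ^ c) ^ ((k:ℝ)/((k:ℝ)+1))
            * v x ^ (-(((k:ℝ)-1)/((k:ℝ)+1))) := by
        funext x
        rcases eq_or_lt_of_le (hv x) with hx0 | hxpos
        · rw [hGv0 x hx0.symm, ← hx0, Real.zero_rpow (neg_ne_zero.mpr hbneg.ne'), mul_zero]
        · rw [Real.mul_rpow (Real.rpow_nonneg (hv x) _) (Real.rpow_nonneg (hGpos v x) _),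
            ← Real.rpow_mul (hv x), ← Real.rpow_mul (hGpos v x)]
          have ec : c * ((k:ℝ)/((k:ℝ)+1)) = 1 := by rw [hcdef]; field_simp
          have hb : ((k:ℝ)-1)/k * ((k:ℝ)/((k:ℝ)+1)) = ((k:ℝ)-1)/((k:ℝ)+1) := by
            field_simp
          rw [ec, Real.rpow_one, hb, mul_right_comm, ← Real.rpow_add hxpos]
          have : ((k:ℝ)-1)/((k:ℝ)+1) + -(((k:ℝ)-1)/((k:ℝ)+1)) = 0 := by ring
          rw [this, Real.rpow_zero, one_mul]
      have hGvm : AEMeasurable (G v) μ := by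
        rw [hGveq]
        exact (hfint.aemeasurable.pow aemeasurable_const).mul (hvm.pow aemeasurable_const)
      -- consequence of `hyp` for indicator functions
      have hyp_ind : ∀ E : Set M, MeasurableSet E →
          ((μ E).toReal) ^ ((k:ℝ)/Q) ≤ A * (P * ((μ E).toReal) ^ (k:ℝ)) := by
        intro E hE
        set w : M → ℝ := E.indicator (fun _ => (1:ℝ)) with hwdef
        have hw0 : ∀ x, 0 ≤ w x := fun x => Set.indicator_nonneg (fun _ _ => zero_le_one) x
        have hw01 : ∀ x, w x = 0 ∨ w x = 1 := by
          intro x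
          by_cases hx : x ∈ E
          · right; simp [hwdef, hx]
          · left; simp [hwdef, hx]
        have hwsq : (fun x => w x ^ (2:ℝ)) = w := funext fun x => by
          rcases hw01 x with h | h <;> rw [h]
          · exact Real.zero_rpow (by norm_num)
          · exact Real.one_rpow _
        have hGw := hGchain w hw0 2 one_le_two
        rw [hwsq] at hGw
        have hGw0 : ∀ x, G w x = 0 := by
          intro x
          have hx' := congrFun hGw x
          have h21 : ((2:ℝ) - 1) = 1 := by norm_num
          rw [h21, Real.rpow_one] at hx'
          rcases hw01 x with h | h
          · rw [h] at hx'; simpa using hx'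
          · rw [h] at hx'; rw [mul_one] at hx'; linarith
        have h := hyp w hw0
        have ew1 : (fun x => w x ^ (c * Q)) = w := funext fun x => by
          rcases hw01 x with hh | hh <;> rw [hh]
          · exact Real.zero_rpow (by positivity : (0:ℝ) < c * Q).ne'
          · exact Real.one_rpow _
        have ew2 : (fun x => w x ^ c) = w := funext fun x => by
          rcases hw01 x with hh | hh <;> rw [hh]
          · exact Real.zero_rpow hcpos.ne'
          · exact Real.one_rpow _
        have ew3 : (fun x => (G w x) ^ c) = fun _ => (0:ℝ) := funext fun x => by
          rw [hGw0 x]; exact Real.zero_rpow hcpos.ne'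
        rw [ew1, ew2, ew3] at h
        have hwint : ∫ x, w x ∂μ = (μ E).toReal := by
          exact integral_indicator_one (μ := μ) hE
        rw [hwint] at h
        have hzero : ((∫ (_ : M), (0:ℝ) ∂μ) ^ (1/c)) ^ ((k:ℝ)+1) = 0 := by
          rw [integral_zero, Real.zero_rpow (by positivity : (0:ℝ) < 1/c).ne',
            Real.zero_rpow (by positivity : (0:ℝ) < (k:ℝ)+1).ne']
        rw [hzero, zero_add] at h
        have hm0 : (0:ℝ) ≤ (μ E).toReal := ENNReal.toReal_nonneg
        have hL : ((μ E).toReal ^ (1/(c*Q))) ^ ((k:ℝ)+1) = (μ E).toReal ^ ((k:ℝ)/Q) := by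
          rw [← Real.rpow_mul hm0]
          congr 1
          rw [hcdef]
          field_simp
        have hR : ((μ E).toReal ^ (1/c)) ^ ((k:ℝ)+1) = (μ E).toReal ^ (k:ℝ) := by
          rw [← Real.rpow_mul hm0]
          congr 1
          rw [hcdef]
          field_simp
        rw [hL, hR] at h
        exact h
      rcases eq_or_ne P 0 with hPeq | hPne
      · have h := hyp_ind Set.univ MeasurableSet.univ
        rw [hPeq] at h
        simp only [zero_mul, mul_zero] at h
        have h0 : ((μ Set.univ).toReal) ^ ((k:ℝ)/Q) = 0 :=
          le_antisymm h (Real.rpow_nonneg ENNReal.toReal_nonneg _)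
        have hμu : (μ Set.univ).toReal = 0 :=
          (Real.rpow_eq_zero ENNReal.toReal_nonneg (by positivity : (0:ℝ) < (k:ℝ)/Q).ne').mp h0
        have hμ : μ = 0 := by
          rcases (ENNReal.toReal_eq_zero_iff _).mp hμu with h' | h'
          · exact Measure.measure_univ_eq_zero.mp h'
          · exact absurd h' (measure_ne_top μ _)
        rw [hμ] at hXdef
        simp at hXdef
        linarith
      have hPpos : 0 < P := lt_of_le_of_ne hP0 (Ne.symm hPne)
      have hepos : 0 < (k:ℝ) - (k:ℝ)/Q := sub_pos.2 (div_lt_self hkpos hQ1)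
      set δ : ℝ := (1/(A*P)) ^ (1/((k:ℝ) - (k:ℝ)/Q)) with hδdef
      have hδpos : 0 < δ := Real.rpow_pos_of_pos (by positivity) _
      have hsmall : ∀ E : Set M, MeasurableSet E → (μ E).toReal < δ → μ E = 0 := by
        intro E hE hlt
        by_contra hne
        have hm : 0 < (μ E).toReal := ENNReal.toReal_pos hne (measure_ne_top μ E)
        have h := hyp_ind E hE
        have hsplit : (μ E).toReal ^ (k:ℝ)
            = (μ E).toReal ^ ((k:ℝ)/Q) * (μ E).toReal ^ ((k:ℝ) - (k:ℝ)/Q) := by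
          rw [← Real.rpow_add hm]
          congr 1
          ring
        rw [hsplit] at h
        have hpow : 0 < (μ E).toReal ^ ((k:ℝ)/Q) := Real.rpow_pos_of_pos hm _
        have h1' : 1 ≤ A * P * (μ E).toReal ^ ((k:ℝ) - (k:ℝ)/Q) := by
          have hh : 1 * ((μ E).toReal ^ ((k:ℝ)/Q))
              ≤ (A * P * (μ E).toReal ^ ((k:ℝ) - (k:ℝ)/Q)) * ((μ E).toReal ^ ((k:ℝ)/Q)) := by
            rw [one_mul]
            calc (μ E).toReal ^ ((k:ℝ)/Q)
                ≤ A * (P * ((μ E).toReal ^ ((k:ℝ)/Q) * (μ E).toReal ^ ((k:ℝ) - (k:ℝ)/Q))) := h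
              _ = (A * P * (μ E).toReal ^ ((k:ℝ) - (k:ℝ)/Q)) * ((μ E).toReal ^ ((k:ℝ)/Q)) := by
                  ring
          exact le_of_mul_le_mul_right hh hpow
        have hge : δ ≤ (μ E).toReal := by
          have h2' : (1/(A*P)) ≤ (μ E).toReal ^ ((k:ℝ) - (k:ℝ)/Q) := by
            rw [div_le_iff₀ (by positivity)]
            linarith
          calc δ = (1/(A*P)) ^ (1/((k:ℝ) - (k:ℝ)/Q)) := hδdef
            _ ≤ ((μ E).toReal ^ ((k:ℝ) - (k:ℝ)/Q)) ^ (1/((k:ℝ) - (k:ℝ)/Q)) :=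
                Real.rpow_le_rpow (by positivity) h2' (by positivity)
            _ = (μ E).toReal := by
                rw [← Real.rpow_mul hm.le]
                rw [mul_one_div, div_self hepos.ne', Real.rpow_one]
        linarith
      have hbdd : ∀ g : M → ℝ, AEMeasurable g μ → ∃ C : ℝ, ∀ᵐ x ∂μ, g x ≤ C := by
        intro g hg
        have hg' : Measurable (hg.mk g) := hg.measurable_mk
        have hgg' : g =ᵐ[μ] hg.mk g := hg.ae_eq_mk
        have hs : ∀ j : ℕ, MeasurableSet {x | (j:ℝ) ≤ hg.mk g x} :=
          fun j => measurableSet_le measurable_const hg'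
        have hanti : Antitone (fun j : ℕ => {x | (j:ℝ) ≤ hg.mk g x}) := by
          intro i j hij x hx
          simp only [Set.mem_setOf_eq] at hx ⊢
          have hcast : (i:ℝ) ≤ (j:ℝ) := Nat.cast_le.mpr hij
          linarith
        have hInter : ⋂ j : ℕ, {x | (j:ℝ) ≤ hg.mk g x} = ∅ := by
          ext x
          simp only [Set.mem_iInter, Set.mem_setOf_eq, Set.mem_empty_iff_false, iff_false,
            not_forall, not_le]
          obtain ⟨j, hj⟩ := exists_nat_gt (hg.mk g x)
          exact ⟨j, hj⟩
        have htend := tendsto_measure_iInter_atTop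
          (fun j => (hs j).nullMeasurableSet) hanti ⟨0, measure_ne_top μ _⟩
        rw [hInter, measure_empty] at htend
        have hev := htend.eventually_lt_const
          (show (0:ℝ≥0∞) < ENNReal.ofReal δ by simp [hδpos])
        obtain ⟨j, hj⟩ := hev.exists
        have hμ0 : μ {x | (j:ℝ) ≤ hg.mk g x} = 0 :=
          hsmall _ (hs j) (ENNReal.toReal_lt_of_lt_ofReal hj)
        refine ⟨j, ?_⟩
        have hlt : ∀ᵐ x ∂μ, hg.mk g x < (j:ℝ) := by
          rw [ae_iff]
          convert hμ0 using 2
          ext x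
          simp [not_lt]
        filter_upwards [hlt, hgg'] with x h1' h2'
        rw [h2']
        exact h1'.le
      obtain ⟨Cv, hCv⟩ := hbdd v hvm
      obtain ⟨Cg, hCg⟩ := hbdd (G v) hGvm
      have hpq : Real.HolderConjugate (2*(k:ℝ)/((k:ℝ)-1)) (2*(k:ℝ)/((k:ℝ)+1)) := by
        rw [Real.holderConjugate_iff]
        constructor
        · rw [lt_div_iff₀ (by linarith)]
          linarith
        · field_simp
          ring
      have hφ : MemLp (fun x => v x ^ (((k:ℝ)-1)/k)) (ENNReal.ofReal (2*(k:ℝ)/((k:ℝ)-1))) μ := by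
        apply MemLp.of_bound ((hvm.pow aemeasurable_const).aestronglyMeasurable)
          (Cv ^ (((k:ℝ)-1)/k))
        filter_upwards [hCv] with x hx
        rw [Real.norm_of_nonneg (Real.rpow_nonneg (hv x) _)]
        exact Real.rpow_le_rpow (hv x) hx (by positivity)
      have hψ : MemLp (fun x => (G v x) ^ c) (ENNReal.ofReal (2*(k:ℝ)/((k:ℝ)+1))) μ := by
        apply MemLp.of_bound ((hGvm.pow aemeasurable_const).aestronglyMeasurable) (Cg ^ c)
        filter_upwards [hCg] with x hx
        rw [Real.norm_of_nonneg (Real.rpow_nonneg (hGpos v x) _)]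
        exact Real.rpow_le_rpow (hGpos v x) hx hcpos.le
      have hHo := integral_mul_le_Lp_mul_Lq_of_nonneg hpq
        (Filter.Eventually.of_forall fun x => Real.rpow_nonneg (hv x) _)
        (Filter.Eventually.of_forall fun x => Real.rpow_nonneg (hGpos v x) _) hφ hψ
      have eφ : (fun x => (v x ^ (((k:ℝ)-1)/k)) ^ (2*(k:ℝ)/((k:ℝ)-1)))
          = fun x => v x ^ (2:ℝ) := funext fun x => by
        rw [← Real.rpow_mul (hv x)]
        congr 1
        field_simp
      have eψ : (fun x => ((G v x) ^ c) ^ (2*(k:ℝ)/((k:ℝ)+1)))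
          = fun x => (G v x) ^ (2:ℝ) := funext fun x => by
        rw [← Real.rpow_mul (hGpos v x), hcdef]
        congr 1
        field_simp
      rw [eφ, eψ] at hHo
      have ep : 1/(2*(k:ℝ)/((k:ℝ)-1)) = ((k:ℝ)-1)/(2*k) := by
        field_simp
      have eq' : 1/(2*(k:ℝ)/((k:ℝ)+1)) = ((k:ℝ)+1)/(2*k) := by
        field_simp
      rw [ep, eq'] at hHo
      exact hXY hHo
    calc S ^ ((1:ℝ)/Q) = (S ^ ((k:ℝ)/Q)) ^ ((1:ℝ)/k) := by
          rw [← Real.rpow_mul hS0]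
          congr 1
          field_simp
      _ ≤ (A * (t ^ ((k:ℝ)+1) * Y ^ (k:ℝ) + P * I ^ (k:ℝ))) ^ ((1:ℝ)/k) := by
          apply Real.rpow_le_rpow (Real.rpow_nonneg hS0 _) ?_ (by positivity)
          refine h1.trans ?_
          have hXY : X ^ (k:ℝ) ≤ Y ^ (k:ℝ) := Real.rpow_le_rpow hX0 h2 (by positivity)
          exact mul_le_mul_of_nonneg_left
            (add_le_add_left
              (mul_le_mul_of_nonneg_left hXY (Real.rpow_nonneg htpos.le _)) _) hA.le
      _ ≤ A ^ ((1:ℝ)/k) * ((t ^ ((k:ℝ)+1) * Y ^ (k:ℝ)) ^ ((1:ℝ)/k) + (P * I ^ (k:ℝ)) ^ ((1:ℝ)/k)) := by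
          rw [Real.mul_rpow hA.le (by positivity)]
          refine mul_le_mul_of_nonneg_left ?_ (Real.rpow_nonneg hA.le _)
          exact rpow_add_le_add_rpow_real (by positivity) (by positivity) (by positivity)
            (by rw [div_le_one hkpos]; linarith)
      _ = A ^ ((1:ℝ)/k) * (t ^ c * Y + P ^ ((1:ℝ)/k) * I) := by
          congr 2
          · rw [Real.mul_rpow (Real.rpow_nonneg htpos.le _) (Real.rpow_nonneg hY0 _),
              ← Real.rpow_mul htpos.le, ← Real.rpow_mul hY0]
            have e2 : (k:ℝ) * ((1:ℝ)/k) = 1 := by field_simp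
            have e1 : ((k:ℝ)+1) * ((1:ℝ)/k) = c := by rw [hcdef]; field_simp
            rw [e1, e2, Real.rpow_one]
          · rw [Real.mul_rpow hP0 (Real.rpow_nonneg hI0 _), ← Real.rpow_mul hI0]
            have e2 : (k:ℝ) * ((1:ℝ)/k) = 1 := by field_simp
            rw [e2, Real.rpow_one]
      _ ≤ A ^ ((1:ℝ)/k) * t ^ c * (Y + P ^ ((1:ℝ)/k) * I) := by
          rw [mul_assoc]
          refine mul_le_mul_of_nonneg_left ?_ (Real.rpow_nonneg hA.le _)
          have htc1 : 1 ≤ t ^ c := by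
            calc (1:ℝ) = 1 ^ c := (Real.one_rpow c).symm
              _ ≤ t ^ c := Real.rpow_le_rpow zero_le_one ht1 hcpos.le
          nlinarith [mul_nonneg (Real.rpow_nonneg hP0 ((1:ℝ)/k)) hI0]
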